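/- β'·(σ_u + σ_d) + k·γ'·σ_u = β·(σ_u + σ_d) + γ·σ_u. That is, the covariance of the treatment D and the outcome Y is the same in the constructed second model (where Var(D) = k²σ_u + σ_d' = σ_u + σ_d) as in the original model. -/

import Mathlib

/-- In the impossibility construction of Theorem 2, Cov(D,Y) matches:
    β'·(σ_u + σ_d) + k·γ'·σ_u = β·(σ_u + σ_d) + γ·σ_u. -/
theorem cov_DY_matches
    (αz γ β σu σz σd σy k : ℝ)
    (hαz : αz ≠ 0) (hγ : γ ≠ 0)
    (hσu : 0 < σu) (hσz : 0 < σz) (hσd : 0 < σd) (hσy : 0 ≤ σy)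
    (hk0 : 0 < k) (hk1 : k < 1)
    (hklb : Real.sqrt (αz ^ 2 * σu / (αz ^ 2 * σu + σz)) < k)
    (hkub : 1 - k ^ 2 ≤ σd / σu)
    (σz' σd' β' γ' σy' : ℝ)
    (hσz' : σz' = αz ^ 2 * σu + σz - αz ^ 2 * σu / k ^ 2)
    (hσd' : σd' = (1 - k ^ 2) * σu + σd)
    (hβ' : β' = β + γ * σu * (1 - k ^ 2) / σd')
    (hγ' : γ' = k * γ * σd / σd')
    (hσy' : σy' = (β + γ) ^ 2 * σu + β ^ 2 * σd + σy -
      (k * β' + γ') ^ 2 * σu - β' ^ 2 * σd') :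
    β' * (σu + σd) + k * γ' * σu = β * (σu + σd) + γ * σu := by
  have hσd'0 : σd' ≠ 0 := by
    have hkk : 0 < 1 - k ^ 2 := by nlinarith
    have h1 : 0 < (1 - k ^ 2) * σu := mul_pos hkk hσu
    nlinarith
  subst hβ' hγ' hσd'
  have h2 : σu * (1 - k ^ 2) + σd ≠ 0 := by rw [mul_comm]; exact hσd'0
  field_simp
  ring
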